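/- Let θ be a CPWL function and consider the composite optimization setting with v̄ ∈ ∂θ(z̄). Suppose that ⟨∇²ₓₓL(x̄,v̄)u, u⟩ ≥ 0 for every u with ∇Φ(x̄)u ∈ 𝒦(z̄,v̄), and that ū satisfies ∇Φ(x̄)ū ∈ 𝒦(z̄,v̄) and ⟨∇²ₓₓL(x̄,v̄)ū, ū⟩ = 0. Then there exists η̄ ∈ ℝ^m with ⟨η̄, w⟩ ≤ 0 for all w ∈ 𝒦(z̄,v̄), ⟨η̄, ∇Φ(x̄)ū⟩ = 0, and ∇²ₓₓL(x̄,v̄)ū + ∇Φ(x̄)*η̄ = 0. -/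

import Mathlib

open Filter Topology Set RealInnerProductSpace

noncomputable section

abbrev Ev (k : ℕ) := EuclideanSpace ℝ (Fin k)

/-- The Bouligand–Severi tangent cone to a set `s` at `x`. -/
def tcone {E : Type*} [NormedAddCommGroup E] [NormedSpace ℝ E] (s : Set E) (x : E) : Set E :=
  {w | ∃ (z : ℕ → E) (c : ℕ → ℝ), (∀ k, z k ∈ s) ∧ (∀ k, 0 ≤ c k) ∧
      Tendsto z atTop (𝓝 x) ∧ Tendsto (fun k => c k • (z k - x)) atTop (𝓝 w)}

/-- The data of a convex piecewise linear (CPWL) extended-real-valued function on `ℝ^m`: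
`θ(z) = max_i (⟨a i, z⟩ - al i)` on the polyhedron `dom θ = {z | ⟨d i, z⟩ ≤ be i ∀ i}`,
and `θ(z) = +∞` outside of it. -/
structure CPWL (m : ℕ) where
  l : ℕ
  p : ℕ
  hl : 0 < l
  a : Fin l → Ev m
  al : Fin l → ℝ
  d : Fin p → Ev m
  be : Fin p → ℝ
  dom_nonempty : ∃ z : Ev m, ∀ i, ⟪d i, z⟫ ≤ be i

namespace CPWL

variable {m : ℕ} (θ : CPWL m)

/-- The (polyhedral) domain of the CPWL function. -/
def dom : Set (Ev m) := {z | ∀ i, ⟪θ.d i, z⟫ ≤ θ.be i}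

/-- The real value `max_i (⟨a i, z⟩ - al i)` of the CPWL function (meaningful on its domain). -/
def val (z : Ev m) : ℝ := ⨆ i : Fin θ.l, (⟪θ.a i, z⟫ - θ.al i)

/-- The CPWL function as an extended-real-valued function. -/
def eval (z : Ev m) : EReal :=
  @ite _ (z ∈ θ.dom) (Classical.propDecidable _) ((θ.val z : ℝ) : EReal) ⊤

/-- The subdifferential (of convex analysis) of the CPWL function. -/
def subdiff (z : Ev m) : Set (Ev m) :=
  {v | z ∈ θ.dom ∧ ∀ z' ∈ θ.dom, ⟪v, z' - z⟫ ≤ θ.val z' - θ.val z}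

/-- Active indices `K(z)` of the max-representation. -/
def Kact (z : Ev m) : Set (Fin θ.l) := {i | θ.val z = ⟪θ.a i, z⟫ - θ.al i}

/-- Active indices `I(z)` of the domain constraints. -/
def Iact (z : Ev m) : Set (Fin θ.p) := {i | ⟪θ.d i, z⟫ = θ.be i}

/-- The critical cone `𝒦(z̄,v̄) = {w ∈ T(z̄; dom θ) : ⟨v̄,w⟩ = θ′(z̄;w)}`. -/
def crit (zb vb : Ev m) : Set (Ev m) :=
  {w | w ∈ tcone θ.dom zb ∧
    Tendsto (fun t : ℝ => (θ.val (zb + t • w) - θ.val zb) / t) (𝓝[>] (0 : ℝ))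
      (𝓝 ⟪vb, w⟫)}

/-- The graph of the subdifferential mapping. -/
def gph : Set (Ev m × Ev m) := {zv | zv.2 ∈ θ.subdiff zv.1}

/-- The graphical derivative `(D∂θ)(z̄,v̄)(u)`. -/
def Dsub (zb vb u : Ev m) : Set (Ev m) := {w | (u, w) ∈ tcone θ.gph (zb, vb)}

/-- The regular coderivative `(D̂*∂θ)(z̄,v̄)(u)`. -/
def Dhat (zb vb u : Ev m) : Set (Ev m) :=
  {w | ∀ h ∈ tcone θ.gph (zb, vb), ⟪w, h.1⟫ - ⟪u, h.2⟫ ≤ 0}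

end CPWL

section VarSys

variable {n m : ℕ}

/-- The adjoint `∇Φ(x)*` of the Jacobian of `Φ` at `x`. -/
def adjD (Φ : Ev n → Ev m) (x : Ev n) : Ev m →L[ℝ] Ev n :=
  ContinuousLinearMap.adjoint (fderiv ℝ Φ x)

/-- `Ψ(x,v) = f(x) + ∇Φ(x)* v`. -/
def Psi (f : Ev n → Ev n) (Φ : Ev n → Ev m) (x : Ev n) (v : Ev m) : Ev n :=
  f x + adjD Φ x v

/-- The partial Jacobian `∇ₓΨ(x̄,v̄)`. -/
def gradxPsi (f : Ev n → Ev n) (Φ : Ev n → Ev m) (xb : Ev n) (vb : Ev m) :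
    Ev n →L[ℝ] Ev n :=
  fderiv ℝ (fun x => Psi f Φ x vb) xb

/-- The Lagrange multiplier set `Λ(x̄)` of the variational system. -/
def Lam (f : Ev n → Ev n) (Φ : Ev n → Ev m) (θ : CPWL m) (xb : Ev n) : Set (Ev m) :=
  {v | Psi f Φ xb v = 0 ∧ v ∈ θ.subdiff (Φ xb)}

/-- `v̄` is a critical multiplier for the variational system. -/
def IsCritical (f : Ev n → Ev n) (Φ : Ev n → Ev m) (θ : CPWL m) (xb : Ev n) (vb : Ev m) :
    Prop :=
  ∃ ξ : Ev n, ξ ≠ 0 ∧ ∃ w ∈ θ.Dsub (Φ xb) vb (fderiv ℝ Φ xb ξ),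
    gradxPsi f Φ xb vb ξ + adjD Φ xb w = 0

/-- The solution map of the canonically perturbed variational system. -/
def Smap (f : Ev n → Ev n) (Φ : Ev n → Ev m) (θ : CPWL m) (p₁ : Ev n) (p₂ : Ev m) :
    Set (Ev n × Ev m) :=
  {xv | Psi f Φ xv.1 xv.2 = p₁ ∧ xv.2 ∈ θ.subdiff (Φ xv.1 + p₂)}

end VarSys

section General

variable {n m : ℕ}

/-- The subdifferential of a general extended-real-valued function. -/
def subdiffE (θ : Ev m → EReal) (z : Ev m) : Set (Ev m) :=
  {v | ∀ z', ((⟪v, z' - z⟫ : ℝ) : EReal) ≤ θ z' - θ z}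

/-- The graph of the subdifferential of a general extended-real-valued function. -/
def gphE (θ : Ev m → EReal) : Set (Ev m × Ev m) := {zv | zv.2 ∈ subdiffE θ zv.1}

/-- The graphical derivative of the subdifferential, general case. -/
def DsubE (θ : Ev m → EReal) (zb vb u : Ev m) : Set (Ev m) :=
  {w | (u, w) ∈ tcone (gphE θ) (zb, vb)}

/-- The Lagrange multiplier set, general case. -/
def LamE (f : Ev n → Ev n) (Φ : Ev n → Ev m) (θ : Ev m → EReal) (xb : Ev n) :
    Set (Ev m) :=
  {v | Psi f Φ xb v = 0 ∧ v ∈ subdiffE θ (Φ xb)}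

/-- The solution map of the canonically perturbed variational system, general case. -/
def SmapE (f : Ev n → Ev n) (Φ : Ev n → Ev m) (θ : Ev m → EReal) (p₁ : Ev n)
    (p₂ : Ev m) : Set (Ev n × Ev m) :=
  {xv | Psi f Φ xv.1 xv.2 = p₁ ∧ xv.2 ∈ subdiffE θ (Φ xv.1 + p₂)}

end General

section Composite

variable {n m : ℕ}

/-- The gradient `∇ₓL(·,v)` of the Lagrangian `L(x,v) = φ₀(x) + ⟨Φ(x),v⟩`. -/
def gradL (φ₀ : Ev n → ℝ) (Φ : Ev n → Ev m) (v : Ev m) (x : Ev n) : Ev n :=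
  gradient (fun y => φ₀ y + ⟪Φ y, v⟫) x

/-- The Hessian `∇²ₓₓL(x̄,v)` as a linear operator. -/
def HessOp (φ₀ : Ev n → ℝ) (Φ : Ev n → Ev m) (v : Ev m) (xb : Ev n) : Ev n →L[ℝ] Ev n :=
  fderiv ℝ (gradL φ₀ Φ v) xb

/-- The Lagrange multiplier set `Λ_com(x̄)` of the composite optimization problem. -/
def LamCom (φ₀ : Ev n → ℝ) (Φ : Ev n → Ev m) (θ : CPWL m) (xb : Ev n) : Set (Ev m) :=
  {v | gradient φ₀ xb + adjD Φ xb v = 0 ∧ v ∈ θ.subdiff (Φ xb)}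

/-- Criticality of a multiplier in the composite optimization setting. -/
def IsCriticalCom (φ₀ : Ev n → ℝ) (Φ : Ev n → Ev m) (θ : CPWL m) (xb : Ev n) (v : Ev m) :
    Prop :=
  ∃ ξ : Ev n, ξ ≠ 0 ∧ ∃ w ∈ θ.Dsub (Φ xb) v (fderiv ℝ Φ xb ξ),
    HessOp φ₀ Φ v xb ξ + adjD Φ xb w = 0

/-- The solution map of the canonically perturbed KKT system of composite optimization. -/
def SKKT (φ₀ : Ev n → ℝ) (Φ : Ev n → Ev m) (θ : CPWL m) (p₁ : Ev n) (p₂ : Ev m) :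
    Set (Ev n × Ev m) :=
  {xv | gradient φ₀ xv.1 + adjD Φ xv.1 xv.2 = p₁ ∧ xv.2 ∈ θ.subdiff (Φ xv.1 + p₂)}

/-- `x̄` is a local minimizer of `φ₀ + θ∘Φ`. -/
def LocalMin (φ₀ : Ev n → ℝ) (Φ : Ev n → Ev m) (θ : CPWL m) (xb : Ev n) : Prop :=
  ∃ U ∈ 𝓝 xb, ∀ x ∈ U,
    ((φ₀ xb : ℝ) : EReal) + θ.eval (Φ xb) ≤ ((φ₀ x : ℝ) : EReal) + θ.eval (Φ x)

end Composite

section Calmness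

variable {n m : ℕ}

/-- Isolated calmness of a solution map at `((0,0), q0)`. -/
def IsolCalm (S : Ev n × Ev m → Set (Ev n × Ev m)) (q0 : Ev n × Ev m) : Prop :=
  ∃ c : ℝ, 0 ≤ c ∧ ∃ U ∈ 𝓝 (0 : Ev n × Ev m), ∃ V ∈ 𝓝 q0,
    ∀ p ∈ U, ∀ q ∈ S p ∩ V, ‖q - q0‖ ≤ c * (‖p.1‖ + ‖p.2‖)

/-- Robust isolated calmness of a solution map at `((0,0), q0)`. -/
def RobustIsolCalm (S : Ev n × Ev m → Set (Ev n × Ev m)) (q0 : Ev n × Ev m) : Prop :=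
  ∃ c : ℝ, 0 ≤ c ∧ ∃ U ∈ 𝓝 (0 : Ev n × Ev m), ∃ V ∈ 𝓝 q0,
    (∀ p ∈ U, ∀ q ∈ S p ∩ V, ‖q - q0‖ ≤ c * (‖p.1‖ + ‖p.2‖)) ∧
    (∀ p ∈ U, (S p ∩ V).Nonempty)

/-- The Lipschitz-like (Aubin) property of a solution map around `((0,0), q0)`. -/
def LipschitzLike (S : Ev n × Ev m → Set (Ev n × Ev m)) (q0 : Ev n × Ev m) : Prop :=
  ∃ c : ℝ, 0 ≤ c ∧ ∃ U ∈ 𝓝 (0 : Ev n × Ev m), ∃ V ∈ 𝓝 q0,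
    ∀ p ∈ U, ∀ p' ∈ U, ∀ q ∈ S p ∩ V, ∃ q' ∈ S p', ‖q - q'‖ ≤ c * ‖p - p'‖

end Calmness



lemma fgcone_closed {N : ℕ} : ∀ (k : ℕ) (c : Fin k → EuclideanSpace ℝ (Fin N)),
    IsClosed {x | ∃ lam : Fin k → ℝ, (∀ j, 0 ≤ lam j) ∧ x = ∑ j, lam j • c j} := by
  intro k
  induction k with
  | zero =>
    intro c
    have : {x : EuclideanSpace ℝ (Fin N) |
        ∃ lam : Fin 0 → ℝ, (∀ j, 0 ≤ lam j) ∧ x = ∑ j, lam j • c j} = {0} := by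
      ext x
      constructor
      · rintro ⟨lam, _, rfl⟩; simp
      · rintro rfl; exact ⟨Fin.elim0, fun j => j.elim0, by simp⟩
    rw [this]; exact isClosed_singleton
  | succ k ih =>
    intro c
    set T : (Fin (k+1) → ℝ) →ₗ[ℝ] EuclideanSpace ℝ (Fin N) :=
      Fintype.linearCombination ℝ c with hT
    have hTapp : ∀ f, T f = ∑ j, f j • c j := fun f => rfl
    by_cases hker : LinearMap.ker T = ⊥
    · -- injective case: closed embedding image of the orthant
      have hemb := LinearMap.isClosedEmbedding_of_injective (f := T) hker
      have horth : IsClosed {lam : Fin (k+1) → ℝ | ∀ j, 0 ≤ lam j} := by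
        have : {lam : Fin (k+1) → ℝ | ∀ j, 0 ≤ lam j} =
            ⋂ j, {lam : Fin (k+1) → ℝ | 0 ≤ lam j} := by ext; simp
        rw [this]
        exact isClosed_iInter fun j =>
          isClosed_le continuous_const (continuous_apply j)
      have himg : {x | ∃ lam : Fin (k+1) → ℝ, (∀ j, 0 ≤ lam j) ∧ x = ∑ j, lam j • c j}
          = T '' {lam | ∀ j, 0 ≤ lam j} := by
        ext x
        constructor
        · rintro ⟨lam, h1, h2⟩; exact ⟨lam, h1, h2.symm⟩
        · rintro ⟨lam, h1, h2⟩; exact ⟨lam, h1, h2.symm⟩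
      rw [himg]
      exact hemb.isClosedMap _ horth
    · -- non-injective: reduce to cones on one fewer generator
      obtain ⟨g, hgker, hgne⟩ : ∃ g, T g = 0 ∧ g ≠ 0 := by
        rw [Submodule.eq_bot_iff] at hker
        push_neg at hker
        obtain ⟨g, hg1, hg2⟩ := hker
        exact ⟨g, hg1, hg2⟩
      -- get g' in ker with a positive coordinate
      obtain ⟨g', hg'ker, p₀, hp₀⟩ : ∃ g', T g' = 0 ∧ ∃ p, 0 < g' p := by
        by_cases hpos : ∃ p, 0 < g p
        · exact ⟨g, hgker, hpos⟩
        · push_neg at hpos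
          refine ⟨-g, by rw [map_neg, hgker, neg_zero], ?_⟩
          obtain ⟨p, hp⟩ : ∃ p, g p ≠ 0 := by
            by_contra h; push_neg at h; exact hgne (funext h)
          exact ⟨p, by simpa using lt_of_le_of_ne (hpos p) hp⟩
      have key : {x | ∃ lam : Fin (k+1) → ℝ, (∀ j, 0 ≤ lam j) ∧ x = ∑ j, lam j • c j}
          = ⋃ p : Fin (k+1), {x | 0 < g' p ∧
              ∃ lam : Fin k → ℝ, (∀ j, 0 ≤ lam j) ∧
                x = ∑ j, lam j • (c ∘ p.succAbove) j} := by
        ext x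
        constructor
        · rintro ⟨lam, hlam, rfl⟩
          classical
          set F : Finset (Fin (k+1)) := Finset.univ.filter (fun j => 0 < g' j) with hF
          have hFne : F.Nonempty := ⟨p₀, by simp [hF, hp₀]⟩
          set t : ℝ := F.inf' hFne (fun j => lam j / g' j) with ht
          obtain ⟨p, hpF, hpt⟩ := F.exists_mem_eq_inf' hFne (fun j => lam j / g' j)
          have hg'p : 0 < g' p := by simpa [hF] using hpF
          have htnonneg : 0 ≤ t := by
            rw [ht]
            apply Finset.le_inf'
            intro j hj
            have : 0 < g' j := by simpa [hF] using hj
            exact div_nonneg (hlam j) this.le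
          set lam' : Fin (k+1) → ℝ := fun j => lam j - t * g' j with hlam'
          have hlam'nonneg : ∀ j, 0 ≤ lam' j := by
            intro j
            by_cases hj : 0 < g' j
            · have hjF : j ∈ F := by simp [hF, hj]
              have : t ≤ lam j / g' j := by rw [ht]; exact Finset.inf'_le _ hjF
              have := (le_div_iff₀ hj).mp this
              simp only [hlam']; linarith
            · push_neg at hj
              have : t * g' j ≤ 0 := mul_nonpos_of_nonneg_of_nonpos htnonneg hj
              have := hlam j
              simp only [hlam']; linarith
          have hlam'p : lam' p = 0 := by
            show lam p - t * g' p = 0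
            rw [ht, hpt]
            field_simp
            ring
          have hsum : ∑ j, lam' j • c j = ∑ j, lam j • c j := by
            have hTg' : ∑ j, (t * g' j) • c j = 0 := by
              have : ∑ j, (t * g' j) • c j = t • T g' := by
                rw [hTapp, Finset.smul_sum]
                exact Finset.sum_congr rfl fun j _ => by rw [smul_smul]
              rw [this, hg'ker, smul_zero]
            calc ∑ j, lam' j • c j
                = ∑ j, (lam j • c j - (t * g' j) • c j) := by
                  apply Finset.sum_congr rfl
                  intro j _
                  rw [hlam', sub_smul]
              _ = ∑ j, lam j • c j - ∑ j, (t * g' j) • c j := Finset.sum_sub_distrib ..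
              _ = ∑ j, lam j • c j := by rw [hTg', sub_zero]
          refine Set.mem_iUnion.mpr ⟨p, hg'p, fun j => lam' (p.succAbove j), ?_, ?_⟩
          · intro j; exact hlam'nonneg _
          · rw [← hsum, Fin.sum_univ_succAbove (fun j => lam' j • c j) p, hlam'p,
              zero_smul, zero_add]
            rfl
        · intro hx
          obtain ⟨p, _, mu, hmu, rfl⟩ := Set.mem_iUnion.mp hx
          classical
          refine ⟨Fin.insertNth (α := fun _ => ℝ) p 0 mu, ?_, ?_⟩
          · refine (Fin.forall_iff_succAbove p).mpr ⟨?_, ?_⟩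
            · rw [Fin.insertNth_apply_same]
            · intro i
              rw [Fin.insertNth_apply_succAbove]
              exact hmu i
          · rw [Fin.sum_univ_succAbove (fun j => (Fin.insertNth (α := fun _ => ℝ) p 0 mu) j • c j) p,
              Fin.insertNth_apply_same, zero_smul, zero_add]
            exact Finset.sum_congr rfl fun i _ => by
              rw [Fin.insertNth_apply_succAbove]; rfl
      rw [key]
      apply isClosed_iUnion_of_finite
      intro p
      by_cases hp : 0 < g' p
      · have : {x | 0 < g' p ∧ ∃ lam : Fin k → ℝ, (∀ j, 0 ≤ lam j) ∧
            x = ∑ j, lam j • (c ∘ p.succAbove) j}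
            = {x | ∃ lam : Fin k → ℝ, (∀ j, 0 ≤ lam j) ∧
                x = ∑ j, lam j • (c ∘ p.succAbove) j} := by
          ext x; simp [hp]
        rw [this]; exact ih _
      · have : {x | 0 < g' p ∧ ∃ lam : Fin k → ℝ, (∀ j, 0 ≤ lam j) ∧
            x = ∑ j, lam j • (c ∘ p.succAbove) j} = ∅ := by
          ext x; simp [hp]
        rw [this]; exact isClosed_empty

lemma farkas_lemma {N : ℕ} {ι : Type*} [Fintype ι] (c : ι → EuclideanSpace ℝ (Fin N))
    (b : EuclideanSpace ℝ (Fin N))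
    (h : ∀ u, (∀ j, ⟪c j, u⟫ ≤ 0) → ⟪b, u⟫ ≤ 0) :
    ∃ lam : ι → ℝ, (∀ j, 0 ≤ lam j) ∧ b = ∑ j, lam j • c j := by
  classical
  set e := Fintype.equivFin ι with he
  set c' : Fin (Fintype.card ι) → EuclideanSpace ℝ (Fin N) := c ∘ e.symm with hc'
  set S : Set (EuclideanSpace ℝ (Fin N)) :=
    {x | ∃ lam : Fin (Fintype.card ι) → ℝ, (∀ j, 0 ≤ lam j) ∧ x = ∑ j, lam j • c' j} with hS
  have hSclosed : IsClosed S := fgcone_closed _ c'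
  -- S as a convex cone
  set K : ConvexCone ℝ (EuclideanSpace ℝ (Fin N)) :=
    { carrier := S
      smul_mem' := by
        rintro r hr x ⟨lam, hlam, rfl⟩
        exact ⟨fun j => r * lam j, fun j => mul_nonneg hr.le (hlam j), by
          rw [Finset.smul_sum]
          exact Finset.sum_congr rfl fun j _ => by rw [smul_smul]⟩
      add_mem' := by
        rintro x ⟨lam, hlam, rfl⟩ y ⟨mu, hmu, rfl⟩
        exact ⟨fun j => lam j + mu j, fun j => add_nonneg (hlam j) (hmu j), by
          rw [← Finset.sum_add_distrib]
          exact Finset.sum_congr rfl fun j _ => by rw [add_smul]⟩ } with hK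
  have hKne : (K : Set (EuclideanSpace ℝ (Fin N))).Nonempty :=
    ⟨0, ⟨fun _ => 0, fun _ => le_refl 0, by simp⟩⟩
  have hbK : b ∈ K := by
    by_contra hb
    obtain ⟨y, hy1, hy2⟩ : ∃ y, (∀ x ∈ K, 0 ≤ ⟪x, y⟫) ∧ ⟪y, b⟫ < 0 := by
      obtain ⟨y, hy1, hy2⟩ := ProperCone.hyperplane_separation'
        (⟨K.toPointedCone ⟨fun _ => 0, fun _ => le_refl 0, by simp⟩, hSclosed⟩ :
          ProperCone ℝ (EuclideanSpace ℝ (Fin N))) (x₀ := b) (fun h => hb h)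
      exact ⟨y, fun x hx => hy1 x hx, by rw [real_inner_comm]; exact hy2⟩
    have hcy : ∀ j : ι, ⟪c j, -y⟫ ≤ 0 := by
      intro j
      have hcS : c j ∈ K := by
        refine ⟨fun i => if e j = i then 1 else 0, fun i => by positivity, ?_⟩
        simp [ite_smul, hc']
      have := hy1 _ hcS
      rw [inner_neg_right]
      linarith
    have := h (-y) hcy
    rw [inner_neg_right] at this
    rw [real_inner_comm] at hy2
    linarith
  obtain ⟨lam, hlam, hsum⟩ := hbK
  refine ⟨fun j => lam (e j), fun j => hlam _, ?_⟩
  rw [hsum]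
  rw [← Equiv.sum_comp e (fun i => lam i • c' i)]
  exact Finset.sum_congr rfl fun j _ => by simp [hc']




lemma paraOne {N : ℕ} (L : Ev N → ℝ) (xb p a b c₀ : Ev N) (Hl : Ev N →L[ℝ] Ev N) (E : ℝ)
    (hgood : ∀ s t : ℝ, s ∈ Icc (0:ℝ) 1 → t ∈ Icc (0:ℝ) 1 →
      DifferentiableAt ℝ L (p + s • a + t • b) ∧
      ‖gradient L (p + s • a + t • b) - c₀ - Hl ((p + s • a + t • b) - xb)‖ ≤ E) :
    |(L (p + a + b) - L (p + b) - L (p + a) + L p) - ⟪Hl a, b⟫| ≤ 2 * E * ‖b‖ := by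
  have hline : ∀ (q : Ev N) (t : ℝ), HasDerivAt (fun τ : ℝ => q + τ • b) b t := by
    intro q t
    have h1 : HasDerivAt (fun τ : ℝ => τ • b) ((1:ℝ) • b) t := (hasDerivAt_id t).smul_const b
    simpa using h1.const_add q
  have hLd : ∀ (q : Ev N) (t : ℝ), DifferentiableAt ℝ L (q + t • b) →
      HasDerivAt (fun τ => L (q + τ • b)) ⟪gradient L (q + t • b), b⟫ t := by
    intro q t hd
    have hF : HasFDerivAt L (InnerProductSpace.toDual ℝ _ (gradient L (q + t • b))) (q + t • b) :=
      hasGradientAt_iff_hasFDerivAt.mp hd.hasGradientAt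
    have := hF.comp_hasDerivAt t (hline q t)
    simpa [Function.comp_def] using this
  set f : ℝ → ℝ := fun t => L (p + a + t • b) - L (p + t • b) - t * ⟪Hl a, b⟫ with hf
  set d : ℝ → ℝ := fun t =>
    ⟪gradient L (p + a + t • b), b⟫ - ⟪gradient L (p + t • b), b⟫ - ⟪Hl a, b⟫ with hd
  have hmem : ∀ t : ℝ, t ∈ Icc (0:ℝ) 1 →
      DifferentiableAt ℝ L (p + a + t • b) ∧ DifferentiableAt ℝ L (p + t • b) ∧
      ‖gradient L (p + a + t • b) - c₀ - Hl ((p + a + t • b) - xb)‖ ≤ E ∧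
      ‖gradient L (p + t • b) - c₀ - Hl ((p + t • b) - xb)‖ ≤ E := by
    intro t ht
    have h1 := hgood 1 t (by norm_num) ht
    have h0 := hgood 0 t (by norm_num) ht
    rw [show p + (1:ℝ) • a + t • b = p + a + t • b by rw [one_smul]] at h1
    rw [show p + (0:ℝ) • a + t • b = p + t • b by rw [zero_smul, add_zero]] at h0
    exact ⟨h1.1, h0.1, h1.2, h0.2⟩
  have hderiv : ∀ t ∈ Icc (0:ℝ) 1, HasDerivWithinAt f (d t) (Icc (0:ℝ) 1) t := by
    intro t ht
    obtain ⟨hd1, hd2, -, -⟩ := hmem t ht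
    have hD1 := hLd (p + a) t (by
      rw [show p + a + t • b = p + a + t • b from rfl]; exact hd1)
    have hD2 := hLd p t hd2
    have hD3 : HasDerivAt (fun τ : ℝ => τ * ⟪Hl a, b⟫) ⟪Hl a, b⟫ t := by
      simpa using hasDerivAt_mul_const (⟪Hl a, b⟫)
    exact (((hD1.sub hD2).sub hD3).hasDerivWithinAt)
  have hbound : ∀ t ∈ Ico (0:ℝ) 1, ‖d t‖ ≤ 2 * E * ‖b‖ := by
    intro t ht
    obtain ⟨-, -, he1, he2⟩ := hmem t (Ico_subset_Icc_self ht)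
    set e₁ := gradient L (p + a + t • b) - c₀ - Hl ((p + a + t • b) - xb) with he₁
    set e₂ := gradient L (p + t • b) - c₀ - Hl ((p + t • b) - xb) with he₂
    have hy : Hl ((p + a + t • b) - xb) - Hl ((p + t • b) - xb) = Hl a := by
      rw [← map_sub]
      congr 1
      abel
    have key : gradient L (p + a + t • b) - gradient L (p + t • b) - Hl a = e₁ - e₂ := by
      rw [he₁, he₂, ← hy]
      abel
    have hdt : d t = ⟪gradient L (p + a + t • b) - gradient L (p + t • b) - Hl a, b⟫ := by
      rw [hd, inner_sub_left, inner_sub_left]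
    rw [Real.norm_eq_abs, hdt, key]
    calc |⟪e₁ - e₂, b⟫| ≤ ‖e₁ - e₂‖ * ‖b‖ := abs_real_inner_le_norm _ _
      _ ≤ (E + E) * ‖b‖ := by
          apply mul_le_mul_of_nonneg_right _ (norm_nonneg b)
          calc ‖e₁ - e₂‖ ≤ ‖e₁‖ + ‖e₂‖ := norm_sub_le _ _
            _ ≤ E + E := add_le_add he1 he2
      _ = 2 * E * ‖b‖ := by ring
  have := norm_image_sub_le_of_norm_deriv_le_segment' hderiv hbound 1 (by norm_num)
  have hf1 : f 1 = L (p + a + b) - L (p + b) - ⟪Hl a, b⟫ := by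
    rw [hf]; simp
  have hf0 : f 0 = L (p + a) - L p := by
    rw [hf]; simp
  rw [hf1, hf0, Real.norm_eq_abs] at this
  calc |(L (p + a + b) - L (p + b) - L (p + a) + L p) - ⟪Hl a, b⟫|
      = |L (p + a + b) - L (p + b) - ⟪Hl a, b⟫ - (L (p + a) - L p)| := by ring_nf
    _ ≤ 2 * E * ‖b‖ * (1 - 0) := this
    _ = 2 * E * ‖b‖ := by ring

lemma paraSym {N : ℕ} (L : Ev N → ℝ) (xb p a b c₀ : Ev N) (Hl : Ev N →L[ℝ] Ev N) (E : ℝ)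
    (hgood : ∀ s t : ℝ, s ∈ Icc (0:ℝ) 1 → t ∈ Icc (0:ℝ) 1 →
      DifferentiableAt ℝ L (p + s • a + t • b) ∧
      ‖gradient L (p + s • a + t • b) - c₀ - Hl ((p + s • a + t • b) - xb)‖ ≤ E) :
    |⟪Hl a, b⟫ - ⟪Hl b, a⟫| ≤ 2 * E * (‖a‖ + ‖b‖) := by
  have h1 := paraOne L xb p a b c₀ Hl E hgood
  have hgood2 : ∀ s t : ℝ, s ∈ Icc (0:ℝ) 1 → t ∈ Icc (0:ℝ) 1 →
      DifferentiableAt ℝ L (p + s • b + t • a) ∧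
      ‖gradient L (p + s • b + t • a) - c₀ - Hl ((p + s • b + t • a) - xb)‖ ≤ E := by
    intro s t hs ht
    have := hgood t s ht hs
    rwa [show p + t • a + s • b = p + s • b + t • a by abel] at this
  have h2 := paraOne L xb p b a c₀ Hl E hgood2
  rw [show p + b + a = p + a + b by abel] at h2
  have e1 : |(L (p + a + b) - L (p + a) - L (p + b) + L p) - ⟪Hl b, a⟫|
      = |(L (p + a + b) - L (p + b) - L (p + a) + L p) - ⟪Hl b, a⟫| := by ring_nf
  rw [e1] at h2
  set Δ := L (p + a + b) - L (p + b) - L (p + a) + L p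
  calc |⟪Hl a, b⟫ - ⟪Hl b, a⟫| = |(⟪Hl a, b⟫ - Δ) + (Δ - ⟪Hl b, a⟫)| := by ring_nf
    _ ≤ |⟪Hl a, b⟫ - Δ| + |Δ - ⟪Hl b, a⟫| := abs_add_le _ _
    _ = |Δ - ⟪Hl a, b⟫| + |Δ - ⟪Hl b, a⟫| := by rw [abs_sub_comm]
    _ ≤ 2 * E * ‖b‖ + 2 * E * ‖a‖ := add_le_add h1 h2
    _ = 2 * E * (‖a‖ + ‖b‖) := by ring

set_option maxHeartbeats 2000000 in
lemma gradient_fderiv_symm {N : ℕ} (L : Ev N → ℝ) (xb : Ev N)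
    (hg : DifferentiableAt ℝ (gradient L) xb) (v w : Ev N) :
    ⟪fderiv ℝ (gradient L) xb v, w⟫ = ⟪fderiv ℝ (gradient L) xb w, v⟫ := by
  set H := fderiv ℝ (gradient L) xb with hHdef
  by_cases hH0 : H = 0
  · rw [hH0]; simp
  obtain ⟨u₀, hu₀⟩ : ∃ u₀, H u₀ ≠ 0 := by
    by_contra hcon; push_neg at hcon
    exact hH0 (ContinuousLinearMap.ext fun u => by simpa using hcon u)
  set K0 : ℝ := ‖v‖ + ‖w‖ + 1 with hK0
  have hK0pos : 0 < K0 := by positivity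
  set h₀ : ℝ := ‖H u₀‖ with hh₀
  have hh₀pos : 0 < h₀ := norm_pos_iff.mpr hu₀
  have hHnorm : 0 < ‖H‖ := norm_pos_iff.mpr hH0
  set R : ℝ := ‖u₀‖ + 1 with hR
  have hRpos : 0 < R := by positivity
  set κ : ℝ := min (1/K0) (h₀/(4*‖H‖*K0)) with hκ
  have hκpos : 0 < κ := lt_min (by positivity) (by positivity)
  have hκK0 : κ * K0 ≤ 1 := by
    have : κ ≤ 1/K0 := min_le_left _ _
    rw [le_div_iff₀ hK0pos] at this
    linarith
  have hκH : ‖H‖ * (κ * K0) ≤ h₀ / 4 := by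
    have h1 : κ ≤ h₀/(4*‖H‖*K0) := min_le_right _ _
    have h2 : κ * (4*‖H‖*K0) ≤ h₀ := by
      rw [← le_div_iff₀ (by positivity)]
      exact h1
    nlinarith
  set C : ℝ := 2 * R * K0 / κ with hC
  have hCpos : 0 < C := by positivity
  suffices hsuff : ∀ ε : ℝ, 0 < ε → |⟪H v, w⟫ - ⟪H w, v⟫| ≤ C * ε by
    by_contra hne
    have habs : 0 < |⟪H v, w⟫ - ⟪H w, v⟫| := abs_pos.mpr (sub_ne_zero.mpr hne)
    have h1 := hsuff (|⟪H v, w⟫ - ⟪H w, v⟫|/(2*C)) (by positivity)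
    have h2 : C * (|⟪H v, w⟫ - ⟪H w, v⟫|/(2*C)) = |⟪H v, w⟫ - ⟪H w, v⟫|/2 := by
      field_simp
    rw [h2] at h1
    linarith
  intro ε hε
  set ε' : ℝ := min ε (h₀/(2*R)) with hε'def
  have hε'pos : 0 < ε' := lt_min hε (by positivity)
  have hε'le : ε' ≤ ε := min_le_left _ _
  have hε'le2 : ε' ≤ h₀/(2*R) := min_le_right _ _
  have hlo : (fun y => gradient L y - gradient L xb - H (y - xb)) =o[𝓝 xb]
      fun y => y - xb := hg.hasFDerivAt.isLittleO
  have hev := Asymptotics.isLittleO_iff.mp hlo hε'pos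
  obtain ⟨δ, hδpos, hδ⟩ := Metric.eventually_nhds_iff.mp hev
  -- the common estimate, given radius r and a goodness guarantee
  have main : ∀ r : ℝ, 0 < r → r * R < δ →
      (∀ y : Ev N, ‖y - (xb + r • u₀)‖ ≤ κ * r * K0 → DifferentiableAt ℝ L y) →
      |⟪H v, w⟫ - ⟪H w, v⟫| ≤ C * ε := by
    intro r hr hrδ hgoodball
    set ρ : ℝ := κ * r with hρ
    have hρpos : 0 < ρ := by positivity
    set p : Ev N := xb + r • u₀ with hp
    set a : Ev N := ρ • v with ha
    set b : Ev N := ρ • w with hb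
    set E : ℝ := ε' * (r * R) with hE
    have hEpos : 0 < E := by positivity
    have hgood : ∀ s t : ℝ, s ∈ Icc (0:ℝ) 1 → t ∈ Icc (0:ℝ) 1 →
        DifferentiableAt ℝ L (p + s • a + t • b) ∧
        ‖gradient L (p + s • a + t • b) - gradient L xb
          - H ((p + s • a + t • b) - xb)‖ ≤ E := by
      intro s t hs ht
      set y : Ev N := p + s • a + t • b with hy
      have hyp : ‖y - p‖ ≤ ρ * K0 := by
        have h1 : y - p = s • a + t • b := by rw [hy]; abel
        rw [h1]
        have h2 : ‖s • a‖ ≤ ρ * ‖v‖ := by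
          rw [ha, norm_smul, norm_smul, Real.norm_eq_abs, Real.norm_eq_abs,
            abs_of_nonneg hs.1, abs_of_nonneg hρpos.le]
          nlinarith [mul_nonneg (sub_nonneg.mpr hs.2) (mul_nonneg hρpos.le (norm_nonneg v))]
        have h3 : ‖t • b‖ ≤ ρ * ‖w‖ := by
          rw [hb, norm_smul, norm_smul, Real.norm_eq_abs, Real.norm_eq_abs,
            abs_of_nonneg ht.1, abs_of_nonneg hρpos.le]
          nlinarith [mul_nonneg (sub_nonneg.mpr ht.2) (mul_nonneg hρpos.le (norm_nonneg w))]
        calc ‖s • a + t • b‖ ≤ ‖s • a‖ + ‖t • b‖ := norm_add_le _ _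
          _ ≤ ρ * ‖v‖ + ρ * ‖w‖ := add_le_add h2 h3
          _ ≤ ρ * K0 := by rw [hK0]; nlinarith [hρpos.le]
      have hdiff : DifferentiableAt ℝ L y := hgoodball y hyp
      have hyx : ‖y - xb‖ ≤ r * R := by
        have h1 : y - xb = r • u₀ + (y - p) := by rw [hp]; abel
        have h2 : ‖r • u₀‖ = r * ‖u₀‖ := by
          rw [norm_smul, Real.norm_eq_abs, abs_of_pos hr]
        have h3 : ρ * K0 ≤ r := by
          rw [hρ]
          calc κ * r * K0 = (κ * K0) * r := by ring
            _ ≤ 1 * r := by nlinarith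
            _ = r := one_mul r
        calc ‖y - xb‖ = ‖r • u₀ + (y - p)‖ := by rw [h1]
          _ ≤ ‖r • u₀‖ + ‖y - p‖ := norm_add_le _ _
          _ ≤ r * ‖u₀‖ + r := by rw [h2]; linarith
          _ = r * R := by rw [hR]; ring
      have happ : ‖gradient L y - gradient L xb - H (y - xb)‖ ≤ E := by
        have h1 := hδ (y := y) (by rw [dist_eq_norm]; linarith)
        calc ‖gradient L y - gradient L xb - H (y - xb)‖ ≤ ε' * ‖y - xb‖ := h1
          _ ≤ ε' * (r * R) := mul_le_mul_of_nonneg_left hyx hε'pos.le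
          _ = E := hE.symm
      exact ⟨hdiff, happ⟩
    have hkey := paraSym L xb p a b (gradient L xb) H E hgood
    have hHa : ⟪H a, b⟫ = ρ^2 * ⟪H v, w⟫ := by
      rw [ha, hb, map_smul, real_inner_smul_left, real_inner_smul_right]; ring
    have hHb : ⟪H b, a⟫ = ρ^2 * ⟪H w, v⟫ := by
      rw [ha, hb, map_smul, real_inner_smul_left, real_inner_smul_right]; ring
    have hna : ‖a‖ = ρ * ‖v‖ := by
      rw [ha, norm_smul, Real.norm_eq_abs, abs_of_pos hρpos]
    have hnb : ‖b‖ = ρ * ‖w‖ := by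
      rw [hb, norm_smul, Real.norm_eq_abs, abs_of_pos hρpos]
    rw [hHa, hHb, hna, hnb] at hkey
    have hfac : |ρ^2 * ⟪H v, w⟫ - ρ^2 * ⟪H w, v⟫| = ρ^2 * |⟪H v, w⟫ - ⟪H w, v⟫| := by
      rw [← mul_sub, abs_mul, abs_of_pos (by positivity : (0:ℝ) < ρ^2)]
    rw [hfac] at hkey
    -- 2 * E * (ρ‖v‖ + ρ‖w‖) ≤ ε' * C * ρ^2
    have hrhs : 2 * E * (ρ * ‖v‖ + ρ * ‖w‖) ≤ ε' * C * ρ^2 := by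
      have hCκ : C * κ = 2 * R * K0 := by
        rw [hC]; field_simp
      have h1 : ρ * ‖v‖ + ρ * ‖w‖ ≤ ρ * K0 := by rw [hK0]; nlinarith [hρpos.le]
      have hκne : κ ≠ 0 := ne_of_gt hκpos
      have h2 : 2 * E * (ρ * K0) = ε' * C * ρ^2 := by
        rw [hE, hρ, hC]
        field_simp
      calc 2 * E * (ρ * ‖v‖ + ρ * ‖w‖) ≤ 2 * E * (ρ * K0) :=
            mul_le_mul_of_nonneg_left h1 (by positivity)
        _ = ε' * C * ρ^2 := h2
    have hfinal : ρ^2 * |⟪H v, w⟫ - ⟪H w, v⟫| ≤ ε' * C * ρ^2 := le_trans hkey hrhs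
    have hdiv : |⟪H v, w⟫ - ⟪H w, v⟫| ≤ ε' * C := by
      have h' : |⟪H v, w⟫ - ⟪H w, v⟫| * ρ^2 ≤ (ε' * C) * ρ^2 := by
        calc |⟪H v, w⟫ - ⟪H w, v⟫| * ρ^2 = ρ^2 * |⟪H v, w⟫ - ⟪H w, v⟫| := mul_comm _ _
          _ ≤ ε' * C * ρ^2 := hfinal
      exact le_of_mul_le_mul_right h' (by positivity)
    calc |⟪H v, w⟫ - ⟪H w, v⟫| ≤ ε' * C := hdiv
      _ ≤ ε * C := mul_le_mul_of_nonneg_right hε'le hCpos.le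
      _ = C * ε := mul_comm _ _
  -- now provide the goodness ball in the two cases
  by_cases hv0 : gradient L xb = 0
  · -- v0 = 0 case
    set r : ℝ := min (δ/(2*R)) 1 with hr
    have hrpos : 0 < r := lt_min (by positivity) one_pos
    have hrδ : r * R < δ := by
      have h1 : r ≤ δ/(2*R) := min_le_left _ _
      have h2 : r * R ≤ δ/2 := by
        calc r * R ≤ δ/(2*R) * R := mul_le_mul_of_nonneg_right h1 hRpos.le
          _ = δ/2 := by field_simp
      exact lt_of_le_of_lt h2 (half_lt_self hδpos)
    apply main r hrpos hrδ
    intro y hyball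
    by_contra hnd
    have hgy : gradient L y = 0 := gradient_eq_zero_of_not_differentiableAt hnd
    have hyx : ‖y - xb‖ ≤ r * R := by
      have h1 : y - xb = r • u₀ + (y - (xb + r • u₀)) := by abel
      have h2 : ‖r • u₀‖ = r * ‖u₀‖ := by
        rw [norm_smul, Real.norm_eq_abs, abs_of_pos hrpos]
      have h3 : κ * r * K0 ≤ r := by
        calc κ * r * K0 = (κ * K0) * r := by ring
          _ ≤ 1 * r := by nlinarith
          _ = r := one_mul r
      calc ‖y - xb‖ = ‖r • u₀ + (y - (xb + r • u₀))‖ := by rw [← h1]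
        _ ≤ ‖r • u₀‖ + ‖y - (xb + r • u₀)‖ := norm_add_le _ _
        _ ≤ r * ‖u₀‖ + r := by rw [h2]; linarith
        _ = r * R := by rw [hR]; ring
    have hsmall := hδ (y := y) (by rw [dist_eq_norm]; linarith)
    rw [hgy, hv0] at hsmall
    -- hsmall : ‖0 - 0 - H (y - xb)‖ ≤ ε' * ‖y - xb‖
    have hup : ‖H (y - xb)‖ ≤ h₀ * r / 2 := by
      have h1 : ‖(0:Ev N) - 0 - H (y - xb)‖ = ‖H (y - xb)‖ := by
        rw [sub_zero, zero_sub, norm_neg]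
      rw [h1] at hsmall
      have h2 : ε' * ‖y - xb‖ ≤ (h₀/(2*R)) * (r * R) :=
        mul_le_mul hε'le2 hyx (norm_nonneg _) (by positivity)
      have h3 : (h₀/(2*R)) * (r * R) = h₀ * r / 2 := by field_simp
      linarith
    have hlow : h₀ * r * 3 / 4 ≤ ‖H (y - xb)‖ := by
      have h1 : H (y - xb) - H (y - (xb + r • u₀)) = H (r • u₀) := by
        rw [← map_sub]; congr 1; abel
      have h2 : ‖H (r • u₀)‖ = r * h₀ := by
        rw [map_smul, norm_smul, Real.norm_eq_abs, abs_of_pos hrpos, hh₀]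
      have h3 : ‖H (y - (xb + r • u₀))‖ ≤ ‖H‖ * (κ * r * K0) :=
        le_trans (H.le_opNorm _) (mul_le_mul_of_nonneg_left hyball hHnorm.le)
      have h4 : ‖H‖ * (κ * r * K0) ≤ h₀ / 4 * r := by
        have : ‖H‖ * (κ * r * K0) = (‖H‖ * (κ * K0)) * r := by ring
        rw [this]
        nlinarith
      have h5 : r * h₀ ≤ ‖H (y - xb)‖ + ‖H (y - (xb + r • u₀))‖ := by
        calc r * h₀ = ‖H (r • u₀)‖ := h2.symm
          _ = ‖H (y - xb) - H (y - (xb + r • u₀))‖ := by rw [h1]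
          _ ≤ ‖H (y - xb)‖ + ‖H (y - (xb + r • u₀))‖ := norm_sub_le _ _
      nlinarith
    nlinarith [mul_pos hh₀pos hrpos]
  · -- v0 ≠ 0 case
    have hv0pos : 0 < ‖gradient L xb‖ := norm_pos_iff.mpr hv0
    set r : ℝ := min (δ/(2*R)) (‖gradient L xb‖/(2*R*(‖H‖+ε'))) with hr
    have hrpos : 0 < r := lt_min (by positivity) (by positivity)
    have hrδ : r * R < δ := by
      have h1 : r ≤ δ/(2*R) := min_le_left _ _
      have h2 : r * R ≤ δ/2 := by
        calc r * R ≤ δ/(2*R) * R := mul_le_mul_of_nonneg_right h1 hRpos.le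
          _ = δ/2 := by field_simp
      exact lt_of_le_of_lt h2 (half_lt_self hδpos)
    have hrv0 : r * R * (‖H‖ + ε') ≤ ‖gradient L xb‖ / 2 := by
      have h1 : r ≤ ‖gradient L xb‖/(2*R*(‖H‖+ε')) := min_le_right _ _
      rw [le_div_iff₀ (by positivity)] at h1
      nlinarith
    apply main r hrpos hrδ
    intro y hyball
    by_contra hnd
    have hgy : gradient L y = 0 := gradient_eq_zero_of_not_differentiableAt hnd
    have hyx : ‖y - xb‖ ≤ r * R := by
      have h1 : y - xb = r • u₀ + (y - (xb + r • u₀)) := by abel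
      have h2 : ‖r • u₀‖ = r * ‖u₀‖ := by
        rw [norm_smul, Real.norm_eq_abs, abs_of_pos hrpos]
      have h3 : κ * r * K0 ≤ r := by
        calc κ * r * K0 = (κ * K0) * r := by ring
          _ ≤ 1 * r := by nlinarith
          _ = r := one_mul r
      calc ‖y - xb‖ = ‖r • u₀ + (y - (xb + r • u₀))‖ := by rw [← h1]
        _ ≤ ‖r • u₀‖ + ‖y - (xb + r • u₀)‖ := norm_add_le _ _
        _ ≤ r * ‖u₀‖ + r := by rw [h2]; linarith
        _ = r * R := by rw [hR]; ring
    have hsmall := hδ (y := y) (by rw [dist_eq_norm]; linarith)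
    rw [hgy] at hsmall
    have h1 : ‖(0:Ev N) - gradient L xb - H (y - xb)‖
        = ‖gradient L xb + H (y - xb)‖ := by
      rw [zero_sub]
      rw [show -gradient L xb - H (y - xb) = -(gradient L xb + H (y - xb)) by abel]
      rw [norm_neg]
    rw [h1] at hsmall
    have h2 : ‖gradient L xb‖ - ‖H (y - xb)‖ ≤ ‖gradient L xb + H (y - xb)‖ := by
      have := norm_sub_le (gradient L xb + H (y - xb)) (H (y - xb))
      simp only [add_sub_cancel_right] at this
      linarith
    have h3 : ‖H (y - xb)‖ ≤ ‖H‖ * (r * R) :=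
      le_trans (H.le_opNorm _) (mul_le_mul_of_nonneg_left hyx hHnorm.le)
    have h4 : ε' * ‖y - xb‖ ≤ ε' * (r * R) := mul_le_mul_of_nonneg_left hyx hε'pos.le
    nlinarith

namespace CPWL

variable {m : ℕ}

lemma le_val' (θ : CPWL m) (z : Ev m) (i : Fin θ.l) : ⟪θ.a i, z⟫ - θ.al i ≤ θ.val z := by
  haveI : Nonempty (Fin θ.l) := ⟨⟨0, θ.hl⟩⟩
  exact le_ciSup (f := fun i => ⟪θ.a i, z⟫ - θ.al i) (Set.finite_range _).bddAbove i

lemma exists_active (θ : CPWL m) (z : Ev m) : ∃ i, θ.val z = ⟪θ.a i, z⟫ - θ.al i := by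
  haveI : Nonempty (Fin θ.l) := ⟨⟨0, θ.hl⟩⟩
  obtain ⟨i, -, hi⟩ := Finset.exists_max_image Finset.univ
    (fun i => ⟪θ.a i, z⟫ - θ.al i) ⟨⟨0, θ.hl⟩, Finset.mem_univ _⟩
  refine ⟨i, le_antisymm (ciSup_le fun j => hi j (Finset.mem_univ _)) (θ.le_val' z i)⟩

lemma crit_char (θ : CPWL m) (zb vb : Ev m) (hvb : vb ∈ θ.subdiff zb) :
    θ.crit zb vb = {w | (∀ i, ⟪θ.d i, zb⟫ = θ.be i → ⟪θ.d i, w⟫ ≤ 0) ∧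
      (∀ i, θ.val zb = ⟪θ.a i, zb⟫ - θ.al i → ⟪θ.a i, w⟫ ≤ ⟪vb, w⟫)} := by
  classical
  haveI : Nonempty (Fin θ.l) := ⟨⟨0, θ.hl⟩⟩
  obtain ⟨hzdom, hsub⟩ := hvb
  ext w
  constructor
  · rintro ⟨⟨z, c, hzmem, hc, hz, hcz⟩, hlim⟩
    constructor
    · intro i hact
      have ht : Tendsto (fun k => ⟪θ.d i, c k • (z k - zb)⟫) atTop (𝓝 ⟪θ.d i, w⟫) :=
        Filter.Tendsto.inner tendsto_const_nhds hcz
      refine le_of_tendsto ht (Eventually.of_forall fun k => ?_)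
      have h1 : ⟪θ.d i, c k • (z k - zb)⟫ = c k * (⟪θ.d i, z k⟫ - θ.be i) := by
        rw [real_inner_smul_right, inner_sub_right, hact]
      rw [h1]
      exact mul_nonpos_of_nonneg_of_nonpos (hc k) (by linarith [hzmem k i])
    · intro i hact
      refine ge_of_tendsto hlim ?_
      refine Filter.eventually_of_mem self_mem_nhdsWithin fun t ht => ?_
      have htpos : (0:ℝ) < t := ht
      rw [le_div_iff₀ htpos]
      have h1 : ⟪θ.a i, zb + t • w⟫ - θ.al i ≤ θ.val (zb + t • w) := θ.le_val' _ i
      have h2 : ⟪θ.a i, zb + t • w⟫ = ⟪θ.a i, zb⟫ + t * ⟪θ.a i, w⟫ := by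
        rw [inner_add_right, real_inner_smul_right]
      rw [h2] at h1
      have := hact
      linarith [h1]
  · rintro ⟨hd, ha⟩
    -- the uniform step size for staying in the domain
    set B : Fin θ.p → ℝ := fun i =>
      if 0 < ⟪θ.d i, w⟫ ∧ ⟪θ.d i, zb⟫ ≠ θ.be i
      then (θ.be i - ⟪θ.d i, zb⟫) / ⟪θ.d i, w⟫ else 1 with hB
    set S1 : Finset ℝ := insert 1 (Finset.image B Finset.univ) with hS1
    have hS1ne : S1.Nonempty := ⟨1, Finset.mem_insert_self _ _⟩
    set t₁ : ℝ := S1.min' hS1ne with ht₁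
    have hS1pos : ∀ x ∈ S1, 0 < x := by
      intro x hx
      rcases Finset.mem_insert.mp hx with h | h
      · rw [h]; norm_num
      · obtain ⟨i, -, rfl⟩ := Finset.mem_image.mp h
        rw [hB]
        by_cases hcase : 0 < ⟪θ.d i, w⟫ ∧ ⟪θ.d i, zb⟫ ≠ θ.be i
        · simp only [if_pos hcase]
          have hlt : ⟪θ.d i, zb⟫ < θ.be i := lt_of_le_of_ne (hzdom i) hcase.2
          exact div_pos (by linarith) hcase.1
        · simp only [if_neg hcase]; norm_num
    have ht₁pos : 0 < t₁ := hS1pos _ (S1.min'_mem hS1ne)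
    have hdom : ∀ t : ℝ, 0 < t → t ≤ t₁ → zb + t • w ∈ θ.dom := by
      intro t htpos htle i
      have hinner : ⟪θ.d i, zb + t • w⟫ = ⟪θ.d i, zb⟫ + t * ⟪θ.d i, w⟫ := by
        rw [inner_add_right, real_inner_smul_right]
      rw [hinner]
      by_cases hw : ⟪θ.d i, w⟫ ≤ 0
      · have : t * ⟪θ.d i, w⟫ ≤ 0 := mul_nonpos_of_nonneg_of_nonpos htpos.le hw
        linarith [hzdom i]
      · push_neg at hw
        by_cases hact : ⟪θ.d i, zb⟫ = θ.be i
        · linarith [hd i hact]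
        · have hBi : t₁ ≤ B i := Finset.min'_le _ _
            (Finset.mem_insert_of_mem (Finset.mem_image_of_mem B (Finset.mem_univ i)))
          have hBval : B i = (θ.be i - ⟪θ.d i, zb⟫) / ⟪θ.d i, w⟫ := by
            rw [hB]; simp only [if_pos (And.intro hw hact)]
          rw [hBval] at hBi
          have : t ≤ (θ.be i - ⟪θ.d i, zb⟫) / ⟪θ.d i, w⟫ := le_trans htle hBi
          rw [le_div_iff₀ hw] at this
          linarith
    constructor
    · -- tangent cone membership
      refine ⟨fun k => zb + (t₁ / ((k:ℝ)+1)) • w, fun k => ((k:ℝ)+1) / t₁, ?_, ?_, ?_, ?_⟩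
      · intro k
        apply hdom
        · positivity
        · apply div_le_self ht₁pos.le
          exact_mod_cast Nat.one_le_iff_ne_zero.mpr (Nat.succ_ne_zero k)
      · intro k; positivity
      · have hs : Tendsto (fun k : ℕ => t₁ / ((k:ℝ)+1)) atTop (𝓝 0) := by
          have h1 : Tendsto (fun k : ℕ => 1 / ((k:ℝ)+1)) atTop (𝓝 0) :=
            tendsto_one_div_add_atTop_nhds_zero_nat
          have := h1.const_mul t₁
          simpa [div_eq_mul_inv, mul_comm] using this
        have := (hs.smul_const w).const_add zb
        simpa using this
      · have heq : (fun k : ℕ => (((k:ℝ)+1) / t₁) • ((zb + (t₁ / ((k:ℝ)+1)) • w) - zb))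
            = fun _ => w := by
          funext k
          have hk : ((k:ℝ)+1) ≠ 0 := by positivity
          have ht₁ne : t₁ ≠ 0 := ht₁pos.ne'
          rw [add_sub_cancel_left, smul_smul]
          rw [show ((k:ℝ)+1) / t₁ * (t₁ / ((k:ℝ)+1)) = 1 by field_simp]
          rw [one_smul]
        rw [heq]
        exact tendsto_const_nhds
    · -- directional derivative limit
      set G : Fin θ.l → ℝ := fun i =>
        if 0 < ⟪θ.a i, w⟫ - ⟪vb, w⟫ ∧ θ.val zb ≠ ⟪θ.a i, zb⟫ - θ.al i
        then (θ.val zb - (⟪θ.a i, zb⟫ - θ.al i)) / (⟪θ.a i, w⟫ - ⟪vb, w⟫) else t₁ with hG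
      set S2 : Finset ℝ := insert t₁ (Finset.image G Finset.univ) with hS2
      have hS2ne : S2.Nonempty := ⟨t₁, Finset.mem_insert_self _ _⟩
      set t₂ : ℝ := S2.min' hS2ne with ht₂
      have hS2pos : ∀ x ∈ S2, 0 < x := by
        intro x hx
        rcases Finset.mem_insert.mp hx with h | h
        · rw [h]; exact ht₁pos
        · obtain ⟨i, -, rfl⟩ := Finset.mem_image.mp h
          rw [hG]
          by_cases hcase : 0 < ⟪θ.a i, w⟫ - ⟪vb, w⟫ ∧ θ.val zb ≠ ⟪θ.a i, zb⟫ - θ.al i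
          · simp only [if_pos hcase]
            have hlt : ⟪θ.a i, zb⟫ - θ.al i < θ.val zb :=
              lt_of_le_of_ne (θ.le_val' zb i) (fun h => hcase.2 h.symm)
            exact div_pos (by linarith) hcase.1
          · simp only [if_neg hcase]; exact ht₁pos
      have ht₂pos : 0 < t₂ := hS2pos _ (S2.min'_mem hS2ne)
      have ht₂le : t₂ ≤ t₁ := Finset.min'_le _ _ (Finset.mem_insert_self _ _)
      have hval : ∀ t : ℝ, 0 < t → t ≤ t₂ → θ.val (zb + t • w) = θ.val zb + t * ⟪vb, w⟫ := by
        intro t htpos htle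
        apply le_antisymm
        · apply ciSup_le
          intro i
          have hterm : ⟪θ.a i, zb + t • w⟫ - θ.al i
              = (⟪θ.a i, zb⟫ - θ.al i) + t * ⟪θ.a i, w⟫ := by
            rw [inner_add_right, real_inner_smul_right]; ring
          rw [hterm]
          by_cases hK : θ.val zb = ⟪θ.a i, zb⟫ - θ.al i
          · have h1 : t * ⟪θ.a i, w⟫ ≤ t * ⟪vb, w⟫ :=
              mul_le_mul_of_nonneg_left (ha i hK) htpos.le
            rw [← hK]; linarith
          · have hgap : ⟪θ.a i, zb⟫ - θ.al i < θ.val zb :=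
              lt_of_le_of_ne (θ.le_val' zb i) (fun h => hK h.symm)
            by_cases hiw : ⟪θ.a i, w⟫ - ⟪vb, w⟫ ≤ 0
            · have : t * (⟪θ.a i, w⟫ - ⟪vb, w⟫) ≤ 0 :=
                mul_nonpos_of_nonneg_of_nonpos htpos.le hiw
              nlinarith
            · push_neg at hiw
              have hGi : t₂ ≤ G i := Finset.min'_le _ _
                (Finset.mem_insert_of_mem (Finset.mem_image_of_mem G (Finset.mem_univ i)))
              have hGval : G i = (θ.val zb - (⟪θ.a i, zb⟫ - θ.al i)) / (⟪θ.a i, w⟫ - ⟪vb, w⟫) := by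
                rw [hG]
                simp only [if_pos (And.intro (by linarith : (0:ℝ) < ⟪θ.a i, w⟫ - ⟪vb, w⟫)
                  (fun h => hK h))]
              rw [hGval] at hGi
              have h2 : t ≤ (θ.val zb - (⟪θ.a i, zb⟫ - θ.al i)) / (⟪θ.a i, w⟫ - ⟪vb, w⟫) :=
                le_trans htle hGi
              rw [le_div_iff₀ (by linarith)] at h2
              nlinarith
        · have h1 := hsub (zb + t • w) (hdom t htpos (le_trans htle ht₂le))
          have h2 : ⟪vb, (zb + t • w) - zb⟫ = t * ⟪vb, w⟫ := by
            rw [add_sub_cancel_left, real_inner_smul_right]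
          rw [h2] at h1
          linarith
      have hev : ∀ᶠ t in 𝓝[>](0:ℝ),
          (θ.val (zb + t • w) - θ.val zb) / t = ⟪vb, w⟫ := by
        refine Filter.eventually_of_mem (Ioc_mem_nhdsGT_of_mem ⟨le_refl 0, ht₂pos⟩)
          fun t ht => ?_
        rw [hval t ht.1 ht.2,
          show θ.val zb + t * ⟪vb, w⟫ - θ.val zb = t * ⟪vb, w⟫ by ring,
          mul_div_cancel_left₀ _ ht.1.ne']
      exact tendsto_const_nhds.congr' (hev.mono fun t h => h.symm)

end CPWL

set_option maxHeartbeats 2000000 in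
/-- existence of a dual element associated with a zero of the Hessian
quadratic form over critical directions. -/
theorem stmt17 {n m : ℕ} (θ : CPWL m) (φ₀ : Ev n → ℝ) (Φ : Ev n → Ev m)
    (xb : Ev n) (vb : Ev m)
    (hphi : DifferentiableAt ℝ φ₀ xb) (hPhi : DifferentiableAt ℝ Φ xb)
    (hgrad : DifferentiableAt ℝ (gradL φ₀ Φ vb) xb)
    (hvb : vb ∈ θ.subdiff (Φ xb))
    (hpos : ∀ u : Ev n, fderiv ℝ Φ xb u ∈ θ.crit (Φ xb) vb →
      0 ≤ ⟪HessOp φ₀ Φ vb xb u, u⟫)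
    (ub : Ev n) (hub1 : fderiv ℝ Φ xb ub ∈ θ.crit (Φ xb) vb)
    (hub2 : ⟪HessOp φ₀ Φ vb xb ub, ub⟫ = 0) :
    ∃ η : Ev m, (∀ w ∈ θ.crit (Φ xb) vb, ⟪η, w⟫ ≤ 0) ∧
      ⟪η, fderiv ℝ Φ xb ub⟫ = 0 ∧
      HessOp φ₀ Φ vb xb ub + adjD Φ xb η = 0 := by
  classical
  -- symmetry of the Hessian
  have hgrad' : DifferentiableAt ℝ (gradient (fun y => φ₀ y + ⟪Φ y, vb⟫)) xb := hgrad
  have hsym : ∀ u u' : Ev n,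
      ⟪HessOp φ₀ Φ vb xb u, u'⟫ = ⟪HessOp φ₀ Φ vb xb u', u⟫ := fun u u' =>
    gradient_fderiv_symm (fun y => φ₀ y + ⟪Φ y, vb⟫) xb hgrad' u u'
  -- generators of the (polar of the) critical cone
  set A : Ev n →L[ℝ] Ev m := fderiv ℝ Φ xb with hA
  set zb : Ev m := Φ xb with hzb
  set gen : (Fin θ.p ⊕ Fin θ.l) → Ev m := Sum.elim
    (fun i => if ⟪θ.d i, zb⟫ = θ.be i then θ.d i else 0)
    (fun i => if θ.val zb = ⟪θ.a i, zb⟫ - θ.al i then θ.a i - vb else 0) with hgen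
  have hchar := θ.crit_char zb vb hvb
  have hcrit_iff : ∀ w, w ∈ θ.crit zb vb ↔ ∀ j, ⟪gen j, w⟫ ≤ 0 := by
    intro w
    rw [hchar]
    constructor
    · rintro ⟨h1, h2⟩ j
      cases j with
      | inl i =>
        by_cases hact : ⟪θ.d i, zb⟫ = θ.be i
        · rw [hgen]; simp only [Sum.elim_inl, if_pos hact]; exact h1 i hact
        · rw [hgen]; simp only [Sum.elim_inl, if_neg hact, inner_zero_left, le_refl]
      | inr i =>
        by_cases hact : θ.val zb = ⟪θ.a i, zb⟫ - θ.al i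
        · rw [hgen]; simp only [Sum.elim_inr, if_pos hact, inner_sub_left]
          linarith [h2 i hact]
        · rw [hgen]; simp only [Sum.elim_inr, if_neg hact, inner_zero_left, le_refl]
    · intro hj
      constructor
      · intro i hact
        have := hj (Sum.inl i)
        rw [hgen] at this
        simpa only [Sum.elim_inl, if_pos hact] using this
      · intro i hact
        have := hj (Sum.inr i)
        rw [hgen] at this
        simp only [Sum.elim_inr, if_pos hact, inner_sub_left] at this
        linarith
  have hAub : ∀ j, ⟪gen j, A ub⟫ ≤ 0 := (hcrit_iff _).mp hub1
  -- first-order condition from nonnegativity of the quadratic form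
  have hkey : ∀ u : Ev n, (∀ j, ⟪gen j, A u⟫ ≤ 0) → 0 ≤ ⟪HessOp φ₀ Φ vb xb ub, u⟫ := by
    intro u hu
    have hq : ∀ t : ℝ, 0 < t →
        0 ≤ 2 * t * ⟪HessOp φ₀ Φ vb xb ub, u⟫ + t^2 * ⟪HessOp φ₀ Φ vb xb u, u⟫ := by
      intro t ht
      have hmem : A (ub + t • u) ∈ θ.crit zb vb := by
        rw [hcrit_iff]
        intro j
        rw [map_add, map_smul, inner_add_right, real_inner_smul_right]
        nlinarith [hAub j, hu j]
      have hp := hpos _ hmem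
      have e : ⟪HessOp φ₀ Φ vb xb (ub + t • u), ub + t • u⟫
          = 2 * t * ⟪HessOp φ₀ Φ vb xb ub, u⟫ + t^2 * ⟪HessOp φ₀ Φ vb xb u, u⟫ := by
        rw [map_add, map_smul, inner_add_left, inner_add_right, inner_add_right,
          real_inner_smul_left, real_inner_smul_left, real_inner_smul_right,
          real_inner_smul_right, hub2, hsym u ub]
        ring
      rw [e] at hp
      exact hp
    by_contra hneg
    push_neg at hneg
    set c : ℝ := ⟪HessOp φ₀ Φ vb xb ub, u⟫ with hc
    set Q : ℝ := ⟪HessOp φ₀ Φ vb xb u, u⟫ with hQ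
    set t : ℝ := min 1 (-c / (|Q| + 1)) with htdef
    have htpos : 0 < t := lt_min one_pos (div_pos (by linarith) (by positivity))
    have ht1 : t ≤ 1 := min_le_left _ _
    have ht2 : t ≤ -c / (|Q| + 1) := min_le_right _ _
    have htQ : t * (|Q| + 1) ≤ -c := by
      rw [← le_div_iff₀ (by positivity)]
      exact ht2
    have habs : Q ≤ |Q| := le_abs_self Q
    have h1 := hq t htpos
    nlinarith [mul_le_mul_of_nonneg_left htQ htpos.le,
      mul_le_mul_of_nonneg_left habs (mul_nonneg htpos.le htpos.le)]
  -- Farkas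
  have hfark := farkas_lemma (fun j => adjD Φ xb (gen j)) (-(HessOp φ₀ Φ vb xb ub)) (by
    intro u hu
    have hAu : ∀ j, ⟪gen j, A u⟫ ≤ 0 := by
      intro j
      have h := hu j
      have heq : ⟪adjD Φ xb (gen j), u⟫ = ⟪gen j, A u⟫ :=
        ContinuousLinearMap.adjoint_inner_left A u (gen j)
      rw [heq] at h
      exact h
    have h0 := hkey u hAu
    rw [inner_neg_left]
    linarith)
  obtain ⟨lam, hlam, hsum⟩ := hfark
  refine ⟨∑ j, lam j • gen j, ?_, ?_, ?_⟩
  · intro w hw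
    have hw' := (hcrit_iff w).mp hw
    rw [sum_inner]
    apply Finset.sum_nonpos
    intro j _
    rw [real_inner_smul_left]
    exact mul_nonpos_of_nonneg_of_nonpos (hlam j) (hw' j)
  · have hadj : adjD Φ xb (∑ j, lam j • gen j)
        = ∑ j, lam j • (adjD Φ xb (gen j)) := by
      rw [map_sum]
      exact Finset.sum_congr rfl fun j _ => by rw [map_smul]
    have hAeta : adjD Φ xb (∑ j, lam j • gen j) = -(HessOp φ₀ Φ vb xb ub) := by
      rw [hadj, ← hsum]
    have h1 : ⟪∑ j, lam j • gen j, A ub⟫ = ⟪adjD Φ xb (∑ j, lam j • gen j), ub⟫ :=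
      (ContinuousLinearMap.adjoint_inner_left A _ _).symm
    rw [h1, hAeta, inner_neg_left, hub2, neg_zero]
  · have hadj : adjD Φ xb (∑ j, lam j • gen j)
        = ∑ j, lam j • (adjD Φ xb (gen j)) := by
      rw [map_sum]
      exact Finset.sum_congr rfl fun j _ => by rw [map_smul]
    have hAeta : adjD Φ xb (∑ j, lam j • gen j) = -(HessOp φ₀ Φ vb xb ub) := by
      rw [hadj, ← hsum]
    rw [hAeta, add_neg_cancel]
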